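/- There exist a real 2×2 matrix M and orthogonal 2×2 matrices P and Q such that for every ε > 0, ρ_ε(P M Qᵀ) ≠ P · ρ_ε(M) · Qᵀ, where (ρ_ε(M))_{ij} := M_{ij}/(|M_{ij}| + ε). -/
import Mathlib


open Matrix

/-- The elementwise sign-like map `(ρ_ε(M))_{ij} = M_{ij}/(|M_{ij}| + ε)`,
modelling the AdamW preconditioned direction in the limiting case where the
second-moment estimate equals `|M_{ij}|`. -/
noncomputable def rho {n m : Type*} (ε : ℝ) (M : Matrix n m ℝ) : Matrix n m ℝ :=
  Matrix.of fun i j => M i j / (|M i j| + ε)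

/-- AdamW is Schur gauge-dependent: there exist a real 2×2 matrix `M` and
orthogonal matrices `P`, `Q` such that `ρ_ε(P M Qᵀ) ≠ P · ρ_ε(M) · Qᵀ` for
every `ε > 0`. -/
theorem rho_not_orthogonal_equivariant :
    ∃ (M P Q : Matrix (Fin 2) (Fin 2) ℝ), Pᵀ * P = 1 ∧ Qᵀ * Q = 1 ∧
      ∀ ε : ℝ, 0 < ε → rho ε (P * M * Qᵀ) ≠ P * rho ε M * Qᵀ := by
  set a : ℝ := Real.sqrt 2 / 2 with ha
  have ha0 : (0:ℝ) < a := by positivity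
  have ha2 : a * a = 1 / 2 := by
    rw [ha]; rw [div_mul_div_comm, Real.mul_self_sqrt (by norm_num)]; norm_num
  have ha1 : a < 1 := by
    nlinarith [ha0]
  refine ⟨!![1,0;0,0], !![a,-a;a,a], 1, ?_, ?_, ?_⟩
  · ext i j
    fin_cases i <;> fin_cases j <;>
      simp [Matrix.mul_apply, Fin.sum_univ_succ, Matrix.transpose_apply] <;> nlinarith [ha2]
  · simp
  · intro ε hε hcontra
    have h1 := congrFun (congrFun hcontra 0) 0
    have hPM : (!![a,-a;a,a] * !![(1:ℝ),0;0,0] * (1:Matrix (Fin 2) (Fin 2) ℝ)ᵀ) 0 0 = a := by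
      simp [Matrix.mul_apply, Fin.sum_univ_succ]
    have hRHS : (!![a,-a;a,a] * rho ε !![(1:ℝ),0;0,0] * (1:Matrix (Fin 2) (Fin 2) ℝ)ᵀ) 0 0
        = a * (1 / (1 + ε)) := by
      simp [Matrix.mul_apply, Fin.sum_univ_succ, rho, Matrix.of_apply, Matrix.cons_val_zero,
        Matrix.cons_val_one, Matrix.head_cons, Matrix.vecHead, Matrix.vecTail]
    rw [hRHS] at h1
    have h2 : (rho ε (!![a,-a;a,a] * !![(1:ℝ),0;0,0] * (1:Matrix (Fin 2) (Fin 2) ℝ)ᵀ)) 0 0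
        = a / (a + ε) := by
      simp [rho, hPM, abs_of_pos ha0]
    rw [h2] at h1
    have hd1 : a + ε > 0 := by linarith
    have hd2 : (1:ℝ) + ε > 0 := by linarith
    rw [mul_one_div, div_eq_div_iff hd1.ne' hd2.ne'] at h1
    nlinarith
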